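/- Let G be a group with Conradian left-order ≤, let U be a subgroup of G, and let (C', C) be a convex jump in U with respect to the induced order. Then there exists a convex jump (C̄', C̄) in G such that C̄' ∩ U = C' and C̄ ∩ U = C. -/
import Mathlib


/-- A subgroup of a left-ordered group is convex if `a ≤ b ≤ c` with `a, c` in the
subgroup forces `b` into the subgroup. -/
def IsConvexSubgroup {H : Type*} [Group H] [LinearOrder H] (C : Subgroup H) : Prop :=
  ∀ a b c : H, a ≤ b → b ≤ c → a ∈ C → c ∈ C → b ∈ C

/-- `(C', C)` is a convex jump: both are convex, `C' ⊊ C`, and no convex subgroup lies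
strictly between them. -/
def IsConvexJump {H : Type*} [Group H] [LinearOrder H] (C' C : Subgroup H) : Prop :=
  IsConvexSubgroup C' ∧ IsConvexSubgroup C ∧ C' < C ∧
    ∀ B : Subgroup H, IsConvexSubgroup B → C' ≤ B → B ≤ C → B = C' ∨ B = C

section ConradAux
variable {G : Type*} [Group G] [LinearOrder G]

lemma aux_mul_lt (hinv : ∀ a b c : G, a ≤ b → c * a ≤ c * b)
    {a b : G} (c : G) (h : a < b) : c * a < c * b := by
  refine lt_of_le_of_ne (hinv a b c h.le) ?_
  intro e
  exact h.ne (mul_left_cancel e)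

lemma aux_one_le_pow (hinv : ∀ a b c : G, a ≤ b → c * a ≤ c * b)
    {g : G} (hg : 1 ≤ g) (n : ℕ) : 1 ≤ g ^ n := by
  induction n with
  | zero => simp
  | succ n ih =>
    calc (1:G) ≤ g ^ n := ih
    _ = g ^ n * 1 := (mul_one _).symm
    _ ≤ g ^ n * g := hinv _ _ _ hg
    _ = g ^ (n+1) := (pow_succ g n).symm

lemma aux_pow_le_pow (hinv : ∀ a b c : G, a ≤ b → c * a ≤ c * b)
    {g : G} (hg : 1 ≤ g) {m n : ℕ} (h : m ≤ n) : g ^ m ≤ g ^ n := by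
  have h1 : g ^ m * 1 ≤ g ^ m * g ^ (n - m) := hinv _ _ _ (aux_one_le_pow hinv hg _)
  rw [mul_one, ← pow_add] at h1
  have h2 : m + (n - m) = n := by omega
  rwa [h2] at h1

lemma aux_one_lt_pow (hinv : ∀ a b c : G, a ≤ b → c * a ≤ c * b)
    {g : G} (hg : 1 < g) {n : ℕ} (hn : n ≠ 0) : 1 < g ^ n := by
  have : g ^ 1 ≤ g ^ n := aux_pow_le_pow hinv hg.le (by omega)
  rw [pow_one] at this
  exact lt_of_lt_of_le hg this

lemma aux_inv_le_one (hinv : ∀ a b c : G, a ≤ b → c * a ≤ c * b)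
    {g : G} (hg : 1 ≤ g) : g⁻¹ ≤ 1 := by
  have := hinv _ _ g⁻¹ hg
  simpa using this

lemma aux_posPart (hinv : ∀ a b c : G, a ≤ b → c * a ≤ c * b)
    (x : G) : ∃ y : G, 1 ≤ y ∧ (y = x ∨ y = x⁻¹) := by
  rcases le_total 1 x with h | h
  · exact ⟨x, h, Or.inl rfl⟩
  · refine ⟨x⁻¹, ?_, Or.inr rfl⟩
    have := hinv _ _ x⁻¹ h
    simpa using this

/-- The key Conradian contradiction lemma. -/
lemma aux_core (hinv : ∀ a b c : G, a ≤ b → c * a ≤ c * b)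
    (hconrad : ∀ a b : G, 1 < a → 1 < b → ∃ n : ℕ, a * b < (b * a) ^ n)
    {g t : G} (hg : 1 < g) (ht : 1 < t)
    (h2 : t * g ^ 2 ≤ g) (h3 : t * g ^ 3 ≤ g) : False := by
  set X := t * g ^ 2 with hX
  have hXpow : ∀ n : ℕ, X ^ n ≤ g := by
    intro n
    induction n with
    | zero => simpa using hg.le
    | succ n ih =>
      have h4 : X * X ^ n ≤ X * g := hinv _ _ _ ih
      have h5 : X * g = t * g ^ 3 := by
        rw [hX, mul_assoc, ← pow_succ]
      calc X ^ (n+1) = X * X ^ n := by rw [pow_succ']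
      _ ≤ X * g := h4
      _ = t * g ^ 3 := h5
      _ ≤ g := h3
  have hg2 : (1:G) < g ^ 2 := aux_one_lt_pow hinv hg (by norm_num)
  obtain ⟨n, hn⟩ := hconrad (g ^ 2) t hg2 ht
  have h6 : g ^ 2 * t < g := lt_of_lt_of_le hn (hXpow n)
  have h7 : t < (g ^ 2)⁻¹ * g := by
    have := aux_mul_lt hinv ((g ^ 2)⁻¹) h6
    simpa using this
  have h8 : (g ^ 2)⁻¹ * g < 1 := by
    have h9 : g ^ 1 < g ^ 2 := by
      have : g ^ 1 * 1 < g ^ 1 * g := aux_mul_lt hinv _ hg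
      rw [mul_one, ← pow_succ] at this
      exact this
    rw [pow_one] at h9
    have := aux_mul_lt hinv ((g ^ 2)⁻¹) h9
    simpa using this
  exact absurd (ht.trans (h7.trans h8)) (lt_irrefl 1)

lemma aux_bnd_mul (hinv : ∀ a b c : G, a ≤ b → c * a ≤ c * b)
    (hconrad : ∀ a b : G, 1 < a → 1 < b → ∃ n : ℕ, a * b < (b * a) ^ n)
    {g y : G} (hg : 1 < g) {m : ℕ} (hy : y ≤ g ^ m) :
    ∃ q : ℕ, y * g ≤ g ^ q := by
  by_contra hcon
  push_neg at hcon
  have hv1 : (1:G) ≤ y⁻¹ * g ^ m := by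
    have := hinv _ _ y⁻¹ hy
    simpa using this
  set v := y⁻¹ * g ^ m with hv
  have hvj : ∀ j : ℕ, v * g ^ j < g := by
    intro j
    have h1 : g ^ (m + j) < y * g := hcon (m + j)
    have h2 := aux_mul_lt hinv y⁻¹ h1
    calc v * g ^ j = y⁻¹ * g ^ (m + j) := by rw [hv, mul_assoc, ← pow_add]
    _ < y⁻¹ * (y * g) := h2
    _ = g := by group
  rcases eq_or_lt_of_le hv1 with he | hvlt
  · have hy' : y = g ^ m := inv_mul_eq_one.mp he.symm
    have := hcon (m + 1)
    rw [hy', ← pow_succ] at this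
    exact absurd this (lt_irrefl _)
  · exact aux_core hinv hconrad hg hvlt (hvj 2).le (hvj 3).le

lemma aux_bnd_mul_pow (hinv : ∀ a b c : G, a ≤ b → c * a ≤ c * b)
    (hconrad : ∀ a b : G, 1 < a → 1 < b → ∃ n : ℕ, a * b < (b * a) ^ n)
    {g y : G} (hg : 1 < g) {m : ℕ} (hy : y ≤ g ^ m) (k : ℕ) :
    ∃ q : ℕ, y * g ^ k ≤ g ^ q := by
  induction k with
  | zero => exact ⟨m, by simpa using hy⟩
  | succ k ih =>
    obtain ⟨q, hq⟩ := ih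
    obtain ⟨q', hq'⟩ := aux_bnd_mul hinv hconrad hg hq
    refine ⟨q', ?_⟩
    calc y * g ^ (k+1) = y * g ^ k * g := by rw [mul_assoc, ← pow_succ]
    _ ≤ g ^ q' := hq'

variable (hinv : ∀ a b c : G, a ≤ b → c * a ≤ c * b)
variable (hconrad : ∀ a b : G, 1 < a → 1 < b → ∃ n : ℕ, a * b < (b * a) ^ n)

/-- The subgroup of elements bounded (together with their inverses) by powers of `g`. -/
def bSub (g : G) (hg : 1 < g) : Subgroup G where
  carrier := {x | (∃ q : ℕ, x ≤ g ^ q) ∧ (∃ q : ℕ, x⁻¹ ≤ g ^ q)}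
  one_mem' := ⟨⟨0, by simp⟩, ⟨0, by simp⟩⟩
  inv_mem' := by
    rintro x ⟨h1, h2⟩
    exact ⟨h2, by simpa using h1⟩
  mul_mem' := by
    rintro x y ⟨⟨a, hxa⟩, ⟨a', hxa'⟩⟩ ⟨⟨b, hyb⟩, ⟨b', hyb'⟩⟩
    constructor
    · obtain ⟨q, hq⟩ := aux_bnd_mul_pow hinv hconrad hg hxa b
      exact ⟨q, le_trans (hinv _ _ x hyb) hq⟩
    · obtain ⟨q, hq⟩ := aux_bnd_mul_pow hinv hconrad hg hyb' a'
      refine ⟨q, ?_⟩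
      calc (x * y)⁻¹ = y⁻¹ * x⁻¹ := by rw [mul_inv_rev]
      _ ≤ y⁻¹ * g ^ a' := hinv _ _ _ hxa'
      _ ≤ g ^ q := hq

lemma bSub_mem_iff {g : G} (hg : 1 < g) {x : G} :
    x ∈ bSub hinv hconrad g hg ↔ (∃ q : ℕ, x ≤ g ^ q) ∧ (∃ q : ℕ, x⁻¹ ≤ g ^ q) :=
  Iff.rfl

lemma bSub_self_mem {g : G} (hg : 1 < g) : g ∈ bSub hinv hconrad g hg := by
  refine ⟨⟨1, by simp⟩, ⟨0, ?_⟩⟩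
  simpa using aux_inv_le_one hinv hg.le

lemma bSub_convex {g : G} (hg : 1 < g) :
    IsConvexSubgroup (bSub hinv hconrad g hg) := by
  intro a b c hab hbc ha hc
  obtain ⟨⟨qc, hqc⟩, -⟩ := hc
  obtain ⟨-, ⟨s, hs⟩⟩ := ha
  refine ⟨⟨qc, le_trans hbc hqc⟩, ?_⟩
  have h1 : b⁻¹ * a ≤ g ^ 0 := by
    have := hinv _ _ b⁻¹ hab
    simpa using this
  have h2 : b⁻¹ ≤ (b⁻¹ * a) * g ^ s := by
    have := hinv _ _ (b⁻¹ * a) hs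
    simpa [mul_assoc] using this
  obtain ⟨q, hq⟩ := aux_bnd_mul_pow hinv hconrad hg h1 s
  exact ⟨q, le_trans h2 hq⟩

lemma aux_bot_convex : IsConvexSubgroup (⊥ : Subgroup G) := by
  intro a b c hab hbc ha hc
  rw [Subgroup.mem_bot] at *
  subst ha; subst hc
  exact le_antisymm hbc hab

lemma aux_inf_convex {A B : Subgroup G} (hA : IsConvexSubgroup A)
    (hB : IsConvexSubgroup B) : IsConvexSubgroup (A ⊓ B) := by
  intro a b c hab hbc ha hc
  exact ⟨hA a b c hab hbc ha.1 hc.1, hB a b c hab hbc ha.2 hc.2⟩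

lemma aux_chain (hinv : ∀ a b c : G, a ≤ b → c * a ≤ c * b)
    {A B : Subgroup G} (hA : IsConvexSubgroup A) (hB : IsConvexSubgroup B) :
    A ≤ B ∨ B ≤ A := by
  by_cases h : A ≤ B
  · exact Or.inl h
  · right
    obtain ⟨a, haA, haB⟩ := SetLike.not_le_iff_exists.mp h
    obtain ⟨a', ha'1, ha'eq⟩ := aux_posPart hinv a
    have ha'A : a' ∈ A := by
      rcases ha'eq with rfl | rfl
      · exact haA
      · exact inv_mem haA
    have ha'B : a' ∉ B := by
      rcases ha'eq with rfl | rfl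
      · exact haB
      · exact fun hh => haB (by simpa using inv_mem hh)
    intro b hbB
    obtain ⟨b', hb'1, hb'eq⟩ := aux_posPart hinv b
    have hb'B : b' ∈ B := by
      rcases hb'eq with rfl | rfl
      · exact hbB
      · exact inv_mem hbB
    rcases le_total a' b' with h1 | h1
    · exact absurd (hB 1 a' b' ha'1 h1 (one_mem B) hb'B) ha'B
    · have hb'A : b' ∈ A := hA 1 b' a' hb'1 h1 (one_mem A) ha'A
      rcases hb'eq with rfl | heq
      · exact hb'A
      · have : b⁻¹ ∈ A := heq ▸ hb'A
        simpa using inv_mem this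

/-- The union of all convex subgroups not containing `g`. -/
def uSub (g : G) (hg : 1 < g) : Subgroup G where
  carrier := {x | ∃ K : Subgroup G, IsConvexSubgroup K ∧ g ∉ K ∧ x ∈ K}
  one_mem' := ⟨⊥, aux_bot_convex, by simp [hg.ne'], one_mem ⊥⟩
  inv_mem' := by
    rintro x ⟨K, hKc, hKg, hx⟩
    exact ⟨K, hKc, hKg, inv_mem hx⟩
  mul_mem' := by
    rintro x y ⟨K1, hK1c, hK1g, hx⟩ ⟨K2, hK2c, hK2g, hy⟩
    rcases aux_chain hinv hK1c hK2c with h | h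
    · exact ⟨K2, hK2c, hK2g, mul_mem (h hx) hy⟩
    · exact ⟨K1, hK1c, hK1g, mul_mem hx (h hy)⟩

lemma uSub_mem_iff {g : G} (hg : 1 < g) {x : G} :
    x ∈ uSub hinv g hg ↔ ∃ K : Subgroup G, IsConvexSubgroup K ∧ g ∉ K ∧ x ∈ K :=
  Iff.rfl

end ConradAux

/-- A convex jump `(C', C)` of a subgroup `U` of a Conradian left-ordered
group `G` extends to a convex jump `(C̄', C̄)` of `G` with `C̄' ∩ U = C'`, `C̄ ∩ U = C`. -/
theorem stmt8 {G : Type*} [Group G] [LinearOrder G]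
    (hinv : ∀ a b c : G, a ≤ b → c * a ≤ c * b)
    (hconrad : ∀ a b : G, 1 < a → 1 < b → ∃ n : ℕ, a * b < (b * a) ^ n)
    (U : Subgroup G) (C' C : Subgroup ↥U) (hjump : IsConvexJump C' C) :
    ∃ Cb' Cb : Subgroup G, IsConvexJump Cb' Cb ∧
      Cb'.subgroupOf U = C' ∧ Cb.subgroupOf U = C := by
  obtain ⟨hC'conv, hCconv, hlt, hmax⟩ := hjump
  -- transfer the hypotheses to U
  have hinvU : ∀ a b c : ↥U, a ≤ b → c * a ≤ c * b := by
    intro a b c h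
    rw [← Subtype.coe_le_coe] at h ⊢
    push_cast
    exact hinv _ _ _ h
  have hconradU : ∀ a b : ↥U, 1 < a → 1 < b → ∃ n : ℕ, a * b < (b * a) ^ n := by
    intro a b ha hb
    have ha' : (1:G) < (a:G) := by exact_mod_cast ha
    have hb' : (1:G) < (b:G) := by exact_mod_cast hb
    obtain ⟨n, hn⟩ := hconrad _ _ ha' hb'
    exact ⟨n, by exact_mod_cast hn⟩
  -- choose a positive element g' in C \ C'
  obtain ⟨g0, hg0C, hg0C'⟩ := SetLike.exists_of_lt hlt
  obtain ⟨g', hg'1, hg'eq⟩ := aux_posPart hinvU g0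
  have hg'C : g' ∈ C := by
    rcases hg'eq with rfl | rfl
    · exact hg0C
    · exact inv_mem hg0C
  have hg'C' : g' ∉ C' := by
    rcases hg'eq with rfl | rfl
    · exact hg0C'
    · exact fun hh => hg0C' (by simpa using inv_mem hh)
  have hg'ne : g' ≠ 1 := by
    rintro rfl
    exact hg'C' (one_mem C')
  have hg'pos : (1:↥U) < g' := lt_of_le_of_ne hg'1 (Ne.symm hg'ne)
  set gb : G := (g' : G) with hgb
  have hgbpos : (1:G) < gb := by exact_mod_cast hg'pos
  -- the two convex subgroups of G
  set Cb : Subgroup G := sInf {K : Subgroup G | IsConvexSubgroup K ∧ gb ∈ K} with hCbdef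
  set Cb' : Subgroup G := uSub hinv gb hgbpos with hCb'def
  have hCbconv : IsConvexSubgroup Cb := by
    intro a b c hab hbc ha hc
    rw [hCbdef, Subgroup.mem_sInf] at *
    intro K hK
    exact hK.1 a b c hab hbc (ha K hK) (hc K hK)
  have hCb'conv : IsConvexSubgroup Cb' := by
    intro a b c hab hbc ha hc
    obtain ⟨K1, hK1c, hK1g, haK⟩ := ha
    obtain ⟨K2, hK2c, hK2g, hcK⟩ := hc
    rcases aux_chain hinv hK1c hK2c with h | h
    · exact ⟨K2, hK2c, hK2g, hK2c a b c hab hbc (h haK) hcK⟩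
    · exact ⟨K1, hK1c, hK1g, hK1c a b c hab hbc haK (h hcK)⟩
  have hgbCb : gb ∈ Cb := by
    rw [hCbdef, Subgroup.mem_sInf]
    exact fun K hK => hK.2
  have hgbCb' : gb ∉ Cb' := by
    rintro ⟨K, hKc, hKg, hgK⟩
    exact hKg hgK
  have hle : Cb' ≤ Cb := by
    rintro x ⟨K, hKc, hKg, hxK⟩
    rw [hCbdef, Subgroup.mem_sInf]
    rintro K' ⟨hK'c, hK'g⟩
    rcases aux_chain hinv hKc hK'c with h | h
    · exact h hxK
    · exact absurd (h hK'g) hKg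
  have hCblt : Cb' < Cb := lt_of_le_of_ne hle (by
    intro e
    rw [e] at hgbCb'
    exact hgbCb' hgbCb)
  have hjumpG : IsConvexJump Cb' Cb := by
    refine ⟨hCb'conv, hCbconv, hCblt, ?_⟩
    intro B hBconv hB1 hB2
    by_cases hgB : gb ∈ B
    · right
      refine le_antisymm hB2 ?_
      rw [hCbdef]
      exact sInf_le ⟨hBconv, hgB⟩
    · left
      refine le_antisymm ?_ hB1
      intro x hx
      exact ⟨B, hBconv, hgB, hx⟩
  -- the bounded subgroups
  set SG : Subgroup G := bSub hinv hconrad gb hgbpos with hSGdef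
  set SU : Subgroup ↥U := bSub hinvU hconradU g' hg'pos with hSUdef
  have hCbSG : Cb ≤ SG := by
    rw [hCbdef]
    exact sInf_le ⟨bSub_convex hinv hconrad hgbpos, bSub_self_mem hinv hconrad hgbpos⟩
  -- C is contained in SU
  have hCSU : C ≤ SU := by
    have hBconv : IsConvexSubgroup (SU ⊓ C) :=
      aux_inf_convex (bSub_convex hinvU hconradU hg'pos) hCconv
    have hC'B : C' ≤ SU ⊓ C := by
      intro c' hc'
      obtain ⟨y, hy1, hyeq⟩ := aux_posPart hinvU c'
      have hyC' : y ∈ C' := by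
        rcases hyeq with rfl | rfl
        · exact hc'
        · exact inv_mem hc'
      have hyle : y ≤ g' := by
        by_contra hgt
        push_neg at hgt
        exact hg'C' (hC'conv 1 g' y hg'1 hgt.le (one_mem C') hyC')
      have hySU : y ∈ SU := by
        refine ⟨⟨1, by simpa using hyle⟩, ⟨0, ?_⟩⟩
        simpa using aux_inv_le_one hinvU hy1
      have hc'SU : c' ∈ SU := by
        rcases hyeq with rfl | heq
        · exact hySU
        · have : c'⁻¹ ∈ SU := heq ▸ hySU
          simpa using inv_mem this
      exact ⟨hc'SU, hlt.le hc'⟩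
    rcases hmax (SU ⊓ C) hBconv hC'B inf_le_right with hB | hB
    · exfalso
      have : g' ∈ SU ⊓ C := ⟨bSub_self_mem hinvU hconradU hg'pos, hg'C⟩
      rw [hB] at this
      exact hg'C' this
    · intro c hc
      have : c ∈ SU ⊓ C := by rw [hB]; exact hc
      exact this.1
  -- key membership fact: Cb ∩ U = C
  have hCbC : Cb.subgroupOf U = C := by
    ext x
    rw [Subgroup.mem_subgroupOf]
    constructor
    · intro hx
      obtain ⟨⟨q, hq⟩, ⟨q', hq'⟩⟩ := hCbSG hx
      rcases le_total 1 x with h1 | h1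
      · have hxle : x ≤ g' ^ q := by
          rw [← Subtype.coe_le_coe]
          push_cast
          exact hq
        exact hCconv 1 x (g' ^ q) h1 hxle (one_mem C) (pow_mem hg'C q)
      · have h2 : (1:↥U) ≤ x⁻¹ := by
          have := hinvU _ _ x⁻¹ h1
          simpa using this
        have hxle : x⁻¹ ≤ g' ^ q' := by
          rw [← Subtype.coe_le_coe]
          push_cast
          exact hq'
        have : x⁻¹ ∈ C := hCconv 1 x⁻¹ (g' ^ q') h2 hxle (one_mem C) (pow_mem hg'C q')
        simpa using inv_mem this
    · intro hx
      rw [hCbdef, Subgroup.mem_sInf]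
      rintro K ⟨hKconv, hKg⟩
      obtain ⟨y, hy1, hyeq⟩ := aux_posPart hinvU x
      have hyC : y ∈ C := by
        rcases hyeq with rfl | rfl
        · exact hx
        · exact inv_mem hx
      obtain ⟨⟨q, hq⟩, -⟩ := hCSU hyC
      have hyG1 : (1:G) ≤ (y:G) := by exact_mod_cast hy1
      have hyGq : (y:G) ≤ gb ^ q := by exact_mod_cast hq
      have hyK : (y:G) ∈ K := hKconv 1 (y:G) (gb ^ q) hyG1 hyGq (one_mem K) (pow_mem hKg q)
      rcases hyeq with rfl | heq
      · exact hyK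
      · have hcoe : (y:G) = (x:G)⁻¹ := by rw [heq]; push_cast; ring_nf
        rw [hcoe] at hyK
        simpa using inv_mem hyK
  -- Cb' ∩ U = C'
  have hC'le : C' ≤ Cb'.subgroupOf U := by
    intro x hx
    rw [Subgroup.mem_subgroupOf]
    obtain ⟨y, hy1, hyeq⟩ := aux_posPart hinvU x
    have hyC' : y ∈ C' := by
      rcases hyeq with rfl | rfl
      · exact hx
      · exact inv_mem hx
    rcases eq_or_lt_of_le hy1 with he | hypos
    · have hx1 : x = 1 := by
        rcases hyeq with rfl | heq
        · exact he.symm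
        · have : x⁻¹ = 1 := heq ▸ he.symm
          simpa using congrArg (·⁻¹) this
      rw [hx1]
      simpa using one_mem Cb'
    · have hyG : (1:G) < (y:G) := by exact_mod_cast hypos
      set K : Subgroup G := bSub hinv hconrad (y:G) hyG with hKdef
      have hgbK : gb ∉ K := by
        rintro ⟨⟨q, hq⟩, -⟩
        have hq' : g' ≤ y ^ q := by
          rw [← Subtype.coe_le_coe]
          push_cast
          exact hq
        exact hg'C' (hC'conv 1 g' (y ^ q) hg'1 hq' (one_mem C') (pow_mem hyC' q))
      have hyK : (y:G) ∈ K := bSub_self_mem hinv hconrad hyG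
      have hxK : (x:G) ∈ K := by
        rcases hyeq with rfl | heq
        · exact hyK
        · have hcoe : (y:G) = (x:G)⁻¹ := by rw [heq]; push_cast; ring_nf
          rw [hcoe] at hyK
          simpa using inv_mem hyK
      exact ⟨K, bSub_convex hinv hconrad hyG, hgbK, hxK⟩
  have hCb'C' : Cb'.subgroupOf U = C' := by
    have hsub : Cb'.subgroupOf U ≤ Cb.subgroupOf U := fun x hx => by
      rw [Subgroup.mem_subgroupOf] at *
      exact hle hx
    have hsubC : Cb'.subgroupOf U ≤ C := hCbC ▸ hsub
    have hconvsub : IsConvexSubgroup (Cb'.subgroupOf U) := by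
      intro a b c hab hbc ha hc
      rw [Subgroup.mem_subgroupOf] at *
      exact hCb'conv (a:G) (b:G) (c:G) (by exact_mod_cast hab) (by exact_mod_cast hbc) ha hc
    rcases hmax (Cb'.subgroupOf U) hconvsub hC'le hsubC with hB | hB
    · exact hB
    · exfalso
      have : g' ∈ Cb'.subgroupOf U := hB.symm ▸ hg'C
      rw [Subgroup.mem_subgroupOf] at this
      exact hgbCb' this
  exact ⟨Cb', Cb, hjumpG, hCb'C', hCbC⟩
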